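/- Let g be a finite-dimensional simple Lie algebra over ℂ with orthonormal basis {x_i} with respect to a fixed invariant form. On ⋀^{d+1} g define the operator C_w = Σ_{i,j} W_{x_i} ∘ L_{[x_i, x_j]} ∘ I_{x_j}, where W_x is left exterior multiplication by x, I_x is contraction with x via the invariant form, and L_x is the adjoint-action Lie derivative. Define ∂: ⋀^{d+1} g → g ⊗ ⋀^{d-1} g on decomposables by ∂(p₁ ∧ … ∧ p_{d+1}) = Σ_{r<s} (−1)^{r+s} [p_s, p_r] ⊗ p₁ ∧ … ∧ p̂_r ∧ … ∧ p̂_s ∧ … ∧ p_{d+1}. Then C_w vanishes on the kernel of ∂: if y ∈ ⋀^{d+1} g satisfies ∂y = 0, then C_w y = 0. -/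

import Mathlib

/-!
`g` is a finite-dimensional simple complex Lie algebra with invariant form `Φ`
and orthonormal basis `x`.  On the exterior algebra `⋀g` we consider, for
`z ∈ g`, the operators `W_z` (left exterior multiplication by `z`), `I_z`
(contraction with `z` via the form, the odd antiderivation with
`I_z (ι v) = Φ z v`), and `L_z` (the Lie derivative, the even derivation
extending `ad z`); the operators `I` and `L` are characterized by their values
on `1` and the (anti)derivation rules, which we take as hypotheses.
`C_w = ∑ i j, W_{xᵢ} ∘ L_{⁅xᵢ,xⱼ⁆} ∘ I_{xⱼ}` acting on `⋀^{d+1} g`, and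
`∂ : ⋀^{d+1} g → g ⊗ ⋀^{d-1} g` is given on decomposables by
`∂(p₁ ∧ … ∧ p_{d+1}) = ∑ r<s, (-1)^{r+s} ⁅p_s, p_r⁆ ⊗ p₁ ∧ … p̂_r … p̂_s … ∧ p_{d+1}`.
-/

open ExteriorAlgebra
open scoped TensorProduct


section
variable {g : Type} [LieRing g] [LieAlgebra ℂ g]
local notation "E" => ExteriorAlgebra ℂ g
local notation "ιg" => (ExteriorAlgebra.ι ℂ : g →ₗ[ℂ] ExteriorAlgebra ℂ g)


-- list helpers
theorem my_map_eraseIdx {α β} (f : α → β) : ∀ (l : List α) (i : ℕ),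
    (l.map f).eraseIdx i = (l.eraseIdx i).map f := by
  intro l
  induction l with
  | nil => intro i; simp
  | cons a l ih =>
    intro i
    cases i with
    | zero => simp
    | succ i => simp [ih]

theorem my_getD_eraseIdx {α} (a : α) : ∀ (l : List α) (s t : ℕ),
    t < (l.eraseIdx s).length →
    (l.eraseIdx s).getD t a = if t < s then l.getD t a else l.getD (t+1) a := by
  intro l
  induction l with
  | nil => intro s t ht; simp at ht
  | cons b l ih =>
    intro s t ht
    cases s with
    | zero => simp
    | succ s =>
      cases t with
      | zero => simp
      | succ t =>
        simp only [List.eraseIdx_cons_succ, List.getD_cons_succ, List.length_cons] at ht ⊢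
        rw [ih s t (by omega)]
        simp [Nat.succ_lt_succ_iff]

theorem my_eraseIdx_eraseIdx {α} : ∀ (l : List α) (r s : ℕ), r ≤ s →
    (l.eraseIdx (s+1)).eraseIdx r = (l.eraseIdx r).eraseIdx s := by
  intro l
  induction l with
  | nil => intro r s _; simp
  | cons a l ih =>
    intro r s h
    cases r with
    | zero => simp
    | succ r =>
      cases s with
      | zero => omega
      | succ s =>
        simp only [List.eraseIdx_cons_succ, List.eraseIdx_cons_succ]
        rw [ih r s (by omega)]

theorem my_getD_ofFn {α} {n : ℕ} (p : Fin n → α) (a : α) (s : Fin n) :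
    (List.ofFn p).getD s.val a = p s := by
  rw [List.getD_eq_getElem _ _ (by simp [s.isLt]), List.getElem_ofFn]

theorem my_sum_range_succAbove {M : Type*} [AddCommMonoid M] (f : ℕ → M) (n s : ℕ)
    (hs : s ≤ n) :
    ∑ r ∈ Finset.range (n+1), f r
      = f s + ∑ t ∈ Finset.range n, f (if t < s then t else t + 1) := by
  rw [← Fin.sum_univ_eq_sum_range f (n+1),
    Fin.sum_univ_succAbove (fun i => f i.val) ⟨s, Nat.lt_succ_of_le hs⟩]
  congr 1
  rw [← Fin.sum_univ_eq_sum_range (fun t => f (if t < s then t else t + 1)) n]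
  refine Finset.sum_congr rfl fun t _ => ?_
  congr 1
  rcases lt_or_ge (t.val) s with h | h
  · rw [Fin.succAbove_of_castSucc_lt _ _ (by simp [Fin.lt_def, h])]
    simp [h]
  · rw [Fin.succAbove_of_le_castSucc _ _ (by simp [Fin.le_def, h])]
    simp [Nat.not_lt.mpr h]

variable {n : ℕ} (Φ : g →ₗ[ℂ] g →ₗ[ℂ] ℂ) (x : Module.Basis (Fin n) ℂ g)

theorem my_iota_swap (a b : g) (c : E) :
    ιg a * (ιg b * c) = -(ιg b * (ιg a * c)) := by
  have h : ιg a * ιg b = -(ιg b * ιg a) :=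
    eq_neg_of_add_eq_zero_left (ExteriorAlgebra.ι_add_mul_swap (R := ℂ) a b)
  rw [← mul_assoc, h, ← mul_assoc, neg_mul]

theorem my_Iexp (Φ : g →ₗ[ℂ] g →ₗ[ℂ] ℂ)
    (Iop : g → (E →ₗ[ℂ] E))
    (hIone : ∀ z : g, Iop z 1 = 0)
    (hImul : ∀ (z v : g) (a : E), Iop z (ιg v * a) = Φ z v • a - ιg v * Iop z a)
    (z : g) : ∀ l : List g,
    Iop z ((l.map ιg).prod)
      = ∑ s ∈ Finset.range l.length,
          (-1:ℂ)^s • (Φ z (l.getD s 0) • ((l.eraseIdx s).map ιg).prod) := by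
  intro l
  induction l with
  | nil => simpa using hIone z
  | cons v l ih =>
    rw [List.map_cons, List.prod_cons, hImul, ih, List.length_cons,
      Finset.sum_range_succ']
    simp only [List.eraseIdx_cons_succ, List.eraseIdx_cons_zero, List.getD_cons_succ,
      List.getD_cons_zero, pow_zero, one_smul, pow_succ, List.map_cons, List.prod_cons]
    rw [Finset.mul_sum, sub_eq_add_neg, add_comm, ← Finset.sum_neg_distrib]
    congr 1
    refine Finset.sum_congr rfl fun s _ => ?_
    rw [mul_smul_comm, mul_smul_comm]
    module

theorem my_Lexp
    (Lop : g → (E →ₗ[ℂ] E))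
    (hLone : ∀ z : g, Lop z 1 = 0)
    (hLmul : ∀ (z v : g) (a : E), Lop z (ιg v * a) = ιg ⁅z, v⁆ * a + ιg v * Lop z a)
    (z : g) : ∀ l : List g,
    Lop z ((l.map ιg).prod)
      = ∑ t ∈ Finset.range l.length,
          (-1:ℂ)^t • (ιg ⁅z, l.getD t 0⁆ * ((l.eraseIdx t).map ιg).prod) := by
  intro l
  induction l with
  | nil => simpa using hLone z
  | cons v l ih =>
    rw [List.map_cons, List.prod_cons, hLmul, ih, List.length_cons,
      Finset.sum_range_succ']
    simp only [List.eraseIdx_cons_succ, List.eraseIdx_cons_zero, List.getD_cons_succ,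
      List.getD_cons_zero, pow_zero, one_smul, pow_succ, List.map_cons, List.prod_cons]
    rw [Finset.mul_sum, add_comm]
    congr 1
    refine Finset.sum_congr rfl fun s _ => ?_
    rw [mul_smul_comm, my_iota_swap]
    module

theorem my_lie_sum {ι' : Type*} (a : g) (s : Finset ι') (f : ι' → g) :
    (⁅a, ∑ i ∈ s, f i⁆ : g) = ∑ i ∈ s, ⁅a, f i⁆ := by
  simpa only [LieAlgebra.ad_apply] using map_sum (LieAlgebra.ad ℂ g a) f s

theorem my_sum_lie {ι' : Type*} (w : g) (s : Finset ι') (f : ι' → g) :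
    (⁅∑ i ∈ s, f i, w⁆ : g) = ∑ i ∈ s, ⁅f i, w⁆ := by
  rw [← lie_skew, my_lie_sum, ← Finset.sum_neg_distrib]
  exact Finset.sum_congr rfl fun i _ => lie_skew _ _

theorem my_orth' (hx : ∀ i j, Φ (x i) (x j) = if i = j then 1 else 0) (v : g) :
    ∑ j, Φ (x j) v • x j = v := by
  conv_rhs => rw [← Module.Basis.sum_repr x v]
  refine Finset.sum_congr rfl fun j _ => ?_
  congr 1
  conv_lhs => rw [← Module.Basis.sum_repr x v]
  rw [map_sum]
  simp [hx, Finset.sum_ite_eq]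

theorem my_inv2 (hΦsymm : ∀ u v : g, Φ u v = Φ v u)
    (hΦinv : ∀ z u v : g, Φ ⁅z, u⁆ v + Φ u ⁅z, v⁆ = 0)
    (a b c : g) : Φ ⁅a, b⁆ c = Φ a ⁅b, c⁆ := by
  have h1 := hΦinv b c a
  have h2 : Φ a ⁅b, c⁆ = Φ ⁅b, c⁆ a := hΦsymm _ _
  have h3 : Φ ⁅b, c⁆ a = - Φ c ⁅b, a⁆ := by linear_combination h1
  have h4 : Φ c ⁅b, a⁆ = Φ ⁅b, a⁆ c := hΦsymm _ _
  have h5 : (⁅b, a⁆ : g) = -⁅a, b⁆ := by rw [← lie_skew]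
  rw [h2, h3, h4, h5, map_neg, LinearMap.neg_apply, neg_neg]

theorem my_jsum (hx : ∀ i j, Φ (x i) (x j) = if i = j then 1 else 0)
    (a v w : g) (Q : E) :
    ∑ j, Φ (x j) v • (ιg a * (ιg ⁅⁅a, x j⁆, w⁆ * Q))
      = ιg a * (ιg ⁅⁅a, v⁆, w⁆ * Q) := by
  conv_rhs => rw [← my_orth' Φ x hx v]
  simp only [my_lie_sum, lie_smul, my_sum_lie, smul_lie, map_sum, map_smul,
    Finset.sum_mul, Finset.mul_sum, smul_mul_assoc, mul_smul_comm]

theorem my_cas (hx : ∀ i j, Φ (x i) (x j) = if i = j then 1 else 0)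
    (hΦsymm : ∀ u v : g, Φ u v = Φ v u)
    (hΦinv : ∀ z u v : g, Φ ⁅z, u⁆ v + Φ u ⁅z, v⁆ = 0)
    (u w : g) (Q : E) :
    ∑ i, ιg (x i) * (ιg ⁅⁅x i, u⁆, w⁆ * Q)
      = ∑ k, ιg ⁅u, ⁅w, x k⁆⁆ * (ιg (x k) * Q) := by
  have step1 : ∀ i, ιg (x i) * (ιg ⁅⁅x i, u⁆, w⁆ * Q)
      = ∑ k, Φ (x k) ⁅⁅x i, u⁆, w⁆ • (ιg (x i) * (ιg (x k) * Q)) := by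
    intro i
    conv_lhs => rw [← my_orth' Φ x hx ⁅⁅x i, u⁆, w⁆]
    simp only [map_sum, map_smul, Finset.sum_mul, Finset.mul_sum, smul_mul_assoc,
      mul_smul_comm]
  have step2 : ∀ k, ιg ⁅u, ⁅w, x k⁆⁆ * (ιg (x k) * Q)
      = ∑ i, Φ (x i) ⁅u, ⁅w, x k⁆⁆ • (ιg (x i) * (ιg (x k) * Q)) := by
    intro k
    conv_lhs => rw [← my_orth' Φ x hx ⁅u, ⁅w, x k⁆⁆]
    simp only [map_sum, map_smul, Finset.sum_mul, smul_mul_assoc]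
  rw [Finset.sum_congr rfl fun i _ => step1 i, Finset.sum_congr rfl fun k _ => step2 k,
    Finset.sum_comm]
  refine Finset.sum_congr rfl fun k _ => Finset.sum_congr rfl fun i _ => ?_
  congr 1
  rw [hΦsymm (x k) _, my_inv2 Φ hΦsymm hΦinv ⁅x i, u⁆ w (x k),
    my_inv2 Φ hΦsymm hΦinv (x i) u ⁅w, x k⁆]

noncomputable def Aex (x : Module.Basis (Fin n) ℂ g) (a b : g) (m : List g) : ExteriorAlgebra ℂ g :=
  ∑ k, ιg ⁅a, ⁅b, x k⁆⁆ * (ιg (x k) * (m.map ιg).prod)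

noncomputable def Bex (x : Module.Basis (Fin n) ℂ g) (w : g) (m : List g) : ExteriorAlgebra ℂ g :=
  ∑ k, ιg ⁅w, x k⁆ * (ιg (x k) * (m.map ιg).prod)

theorem AsubA (x : Module.Basis (Fin n) ℂ g) (a b : g) (m : List g) :
    Aex x a b m - Aex x b a m = Bex x ⁅a, b⁆ m := by
  rw [Aex, Aex, Bex, ← Finset.sum_sub_distrib]
  refine Finset.sum_congr rfl fun k _ => ?_
  rw [← sub_mul, ← map_sub, ← lie_lie]

theorem my_main
    (hΦsymm : ∀ u v : g, Φ u v = Φ v u)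
    (hΦinv : ∀ z u v : g, Φ ⁅z, u⁆ v + Φ u ⁅z, v⁆ = 0)
    (hx : ∀ i j, Φ (x i) (x j) = if i = j then 1 else 0)
    (Iop : g → (E →ₗ[ℂ] E))
    (hIone : ∀ z : g, Iop z 1 = 0)
    (hImul : ∀ (z v : g) (a : E), Iop z (ιg v * a) = Φ z v • a - ιg v * Iop z a)
    (Lop : g → (E →ₗ[ℂ] E))
    (hLone : ∀ z : g, Lop z 1 = 0)
    (hLmul : ∀ (z v : g) (a : E), Lop z (ιg v * a) = ιg ⁅z, v⁆ * a + ιg v * Lop z a)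
    (d : ℕ) (p : Fin (d+1) → g) :
    ∑ i, ∑ j, ιg (x i) * Lop ⁅x i, x j⁆ (Iop (x j) ((List.ofFn p).map ιg).prod)
      = ∑ s ∈ Finset.range (d+1), ∑ r ∈ Finset.range (d+1),
          (if r < s then
            (-1:ℂ)^(r+s) • Bex x ⁅(List.ofFn p).getD s 0, (List.ofFn p).getD r 0⁆
              (((List.ofFn p).eraseIdx s).eraseIdx r)
          else 0) := by
  set l : List g := List.ofFn p with hldef
  have hl : l.length = d + 1 := by simp [hldef]
  have hlen : ∀ s, s < d + 1 → (l.eraseIdx s).length = d := by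
    intro s hs
    rw [List.length_eraseIdx]
    simp [hl, hs]
  have hLexp : ∀ (z : g) (s : ℕ), s ∈ Finset.range (d+1) →
      Lop z (((l.eraseIdx s).map ιg).prod)
        = ∑ t ∈ Finset.range d,
            (-1:ℂ)^t • (ιg ⁅z, (l.eraseIdx s).getD t 0⁆ *
              (((l.eraseIdx s).eraseIdx t).map ιg).prod) := by
    intro z s hs
    rw [my_Lexp Lop hLone hLmul z (l.eraseIdx s), hlen s (Finset.mem_range.mp hs)]
  -- Step 1: expand everything
  have step1 : ∑ i, ∑ j, ιg (x i) * Lop ⁅x i, x j⁆ (Iop (x j) ((l.map ιg)).prod)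
      = ∑ s ∈ Finset.range (d+1), ∑ t ∈ Finset.range d,
          (-1:ℂ)^s • ((-1:ℂ)^t •
            Aex x (l.getD s 0) ((l.eraseIdx s).getD t 0) ((l.eraseIdx s).eraseIdx t)) := by
    have key : ∀ i j, ιg (x i) * Lop ⁅x i, x j⁆ (Iop (x j) ((l.map ιg)).prod)
        = ∑ s ∈ Finset.range (d+1), ∑ t ∈ Finset.range d,
            (-1:ℂ)^s • ((-1:ℂ)^t • (Φ (x j) (l.getD s 0) •
              (ιg (x i) * (ιg ⁅⁅x i, x j⁆, (l.eraseIdx s).getD t 0⁆ *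
                (((l.eraseIdx s).eraseIdx t).map ιg).prod)))) := by
      intro i j
      rw [my_Iexp Φ Iop hIone hImul (x j) l, hl, map_sum]
      rw [Finset.sum_congr rfl fun s hs => by
        rw [map_smul, map_smul, hLexp ⁅x i, x j⁆ s hs]]
      rw [Finset.mul_sum]
      refine Finset.sum_congr rfl fun s hs => ?_
      rw [Finset.smul_sum, Finset.smul_sum, Finset.mul_sum]
      refine Finset.sum_congr rfl fun t ht => ?_
      rw [mul_smul_comm, mul_smul_comm, mul_smul_comm,
        smul_comm ((Φ (x j)) (l.getD s 0)) ((-1:ℂ)^t)]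
    rw [Finset.sum_congr rfl fun i _ => Finset.sum_congr rfl fun j _ => key i j]
    -- reorder sums (i,j,s,t) → (s,t,i,j)
    rw [Finset.sum_congr rfl fun i (_ : i ∈ Finset.univ) => Finset.sum_comm]
    rw [Finset.sum_comm]
    rw [Finset.sum_congr rfl fun s (_ : s ∈ Finset.range (d+1)) =>
      Finset.sum_congr rfl fun i (_ : i ∈ Finset.univ) => Finset.sum_comm]
    rw [Finset.sum_congr rfl fun s (_ : s ∈ Finset.range (d+1)) => Finset.sum_comm]
    refine Finset.sum_congr rfl fun s hs => Finset.sum_congr rfl fun t ht => ?_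
    rw [Finset.sum_congr rfl fun i (_ : i ∈ Finset.univ) => by
      rw [← Finset.smul_sum, ← Finset.smul_sum,
        my_jsum Φ x hx (x i) (l.getD s 0) ((l.eraseIdx s).getD t 0)
          ((((l.eraseIdx s).eraseIdx t).map ιg).prod)]]
    rw [← Finset.smul_sum, ← Finset.smul_sum,
      my_cas Φ x hx hΦsymm hΦinv (l.getD s 0) ((l.eraseIdx s).getD t 0)
        ((((l.eraseIdx s).eraseIdx t).map ιg).prod)]
    rfl
  rw [step1]
  -- Step 2: reindex inner sum over t to a sum over r : range (d+1)
  have step2 : ∀ s ∈ Finset.range (d+1),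
      ∑ t ∈ Finset.range d,
          (-1:ℂ)^s • ((-1:ℂ)^t •
            Aex x (l.getD s 0) ((l.eraseIdx s).getD t 0) ((l.eraseIdx s).eraseIdx t))
        = ∑ r ∈ Finset.range (d+1),
            (if r < s then
              (-1:ℂ)^(r+s) • Aex x (l.getD s 0) (l.getD r 0) ((l.eraseIdx s).eraseIdx r)
            else if s < r then
              -((-1:ℂ)^(r+s) • Aex x (l.getD s 0) (l.getD r 0) ((l.eraseIdx r).eraseIdx s))
            else 0) := by
    intro s hs
    have hs' : s ≤ d := by
      have := Finset.mem_range.mp hs; omega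
    rw [my_sum_range_succAbove (fun r =>
        (if r < s then
          (-1:ℂ)^(r+s) • Aex x (l.getD s 0) (l.getD r 0) ((l.eraseIdx s).eraseIdx r)
        else if s < r then
          -((-1:ℂ)^(r+s) • Aex x (l.getD s 0) (l.getD r 0) ((l.eraseIdx r).eraseIdx s))
        else 0)) d s hs']
    simp only [lt_irrefl, if_false, zero_add]
    refine Finset.sum_congr rfl fun t ht => ?_
    have htd : t < d := Finset.mem_range.mp ht
    have hgetD : (l.eraseIdx s).getD t 0 = if t < s then l.getD t 0 else l.getD (t+1) 0 :=
      my_getD_eraseIdx 0 l s t (by rw [hlen s (by omega)]; exact htd)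
    by_cases h : t < s
    · simp only [if_pos h, hgetD]
      rw [smul_smul, ← pow_add, add_comm t s]
    · simp only [if_neg h, hgetD]
      have h1 : ¬ (t + 1 < s) := by omega
      have h2 : s < t + 1 := by omega
      rw [if_neg h1, if_pos h2]
      have h3 : (l.eraseIdx (t+1)).eraseIdx s = (l.eraseIdx s).eraseIdx t :=
        my_eraseIdx_eraseIdx l s t (by omega)
      rw [h3, smul_smul, show ((-1:ℂ)^s * (-1:ℂ)^t) = -((-1:ℂ)^(t+1+s)) from by
        rw [show t+1+s = (s+t)+1 from by omega, pow_succ, ← pow_add]; ring, neg_smul]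
  rw [Finset.sum_congr rfl step2]
  -- Step 3: pair up (s,r) and (r,s)
  have split : ∀ s r : ℕ,
      (if r < s then
        (-1:ℂ)^(r+s) • Aex x (l.getD s 0) (l.getD r 0) ((l.eraseIdx s).eraseIdx r)
      else if s < r then
        -((-1:ℂ)^(r+s) • Aex x (l.getD s 0) (l.getD r 0) ((l.eraseIdx r).eraseIdx s))
      else 0)
      = (if r < s then
          (-1:ℂ)^(r+s) • Aex x (l.getD s 0) (l.getD r 0) ((l.eraseIdx s).eraseIdx r)
        else 0)
        + (if s < r then
          -((-1:ℂ)^(r+s) • Aex x (l.getD s 0) (l.getD r 0) ((l.eraseIdx r).eraseIdx s))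
        else 0) := by
    intro s r
    rcases lt_trichotomy r s with h | h | h
    · simp only [if_pos h, if_neg (show ¬ s < r by omega), add_zero]
    · subst h; simp
    · simp only [if_neg (show ¬ r < s by omega), if_pos h, zero_add]
  rw [Finset.sum_congr rfl fun s _ => Finset.sum_congr rfl fun r _ => split s r]
  rw [Finset.sum_congr rfl fun s (_ : s ∈ Finset.range (d+1)) => Finset.sum_add_distrib,
    Finset.sum_add_distrib]
  have swap2 : ∑ s ∈ Finset.range (d+1), ∑ r ∈ Finset.range (d+1),
      (if s < r then
        -((-1:ℂ)^(r+s) • Aex x (l.getD s 0) (l.getD r 0) ((l.eraseIdx r).eraseIdx s))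
      else 0)
      = ∑ s ∈ Finset.range (d+1), ∑ r ∈ Finset.range (d+1),
      (if r < s then
        -((-1:ℂ)^(r+s) • Aex x (l.getD r 0) (l.getD s 0) ((l.eraseIdx s).eraseIdx r))
      else 0) := by
    rw [Finset.sum_comm]
    refine Finset.sum_congr rfl fun s _ => Finset.sum_congr rfl fun r _ => ?_
    by_cases h : r < s
    · rw [if_pos h, if_pos h, add_comm r s]
    · rw [if_neg h, if_neg h]
  rw [swap2, ← Finset.sum_add_distrib]
  refine Finset.sum_congr rfl fun s _ => ?_
  rw [← Finset.sum_add_distrib]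
  refine Finset.sum_congr rfl fun r _ => ?_
  by_cases h : r < s
  · rw [if_pos h, if_pos h, if_pos h, ← sub_eq_add_neg, ← smul_sub, AsubA]
  · rw [if_neg h, if_neg h, if_neg h, add_zero]



def brkt (w : g) : g →ₗ[ℂ] g where
  toFun := fun u => ⁅u, w⁆
  map_add' := by intros; simp [add_lie]
  map_smul' := by intros; simp [smul_lie]

noncomputable def Kmap (x : Module.Basis (Fin n) ℂ g) : g →ₗ[ℂ] ExteriorAlgebra ℂ g :=
  ∑ k, (LinearMap.mulRight ℂ (ιg (x k))) ∘ₗ (ιg ∘ₗ brkt (x k))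

noncomputable def Mmap (x : Module.Basis (Fin n) ℂ g) :
    g ⊗[ℂ] ExteriorAlgebra ℂ g →ₗ[ℂ] ExteriorAlgebra ℂ g :=
  TensorProduct.lift ((LinearMap.mul ℂ (ExteriorAlgebra ℂ g)).comp (Kmap x))

theorem Mapply (w : g) (a : E) :
    Mmap x (w ⊗ₜ[ℂ] a) = ∑ k, ιg ⁅w, x k⁆ * (ιg (x k) * a) := by
  rw [Mmap, TensorProduct.lift.tmul]
  simp only [LinearMap.comp_apply, LinearMap.mul_apply', Kmap, LinearMap.sum_apply,
    LinearMap.mulRight_apply, brkt, LinearMap.coe_mk, AddHom.coe_mk, Finset.sum_mul, mul_assoc]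

theorem my_delside (d : ℕ) (del : E →ₗ[ℂ] g ⊗[ℂ] E)
    (hdel : ∀ p : Fin (d + 1) → g,
      del (List.ofFn fun r => ExteriorAlgebra.ι ℂ (p r)).prod =
        ∑ r : Fin (d + 1), ∑ s : Fin (d + 1),
          if r < s then
            ((-1 : ℂ) ^ (r.val + s.val)) •
              (⁅p s, p r⁆ ⊗ₜ[ℂ]
                (((List.ofFn fun t => ExteriorAlgebra.ι ℂ (p t)).eraseIdx
                  s.val).eraseIdx r.val).prod)
          else 0)
    (p : Fin (d+1) → g) :
    Mmap x (del ((List.ofFn p).map ιg).prod)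
      = ∑ s ∈ Finset.range (d+1), ∑ r ∈ Finset.range (d+1),
          (if r < s then
            (-1:ℂ)^(r+s) • Bex x ⁅(List.ofFn p).getD s 0, (List.ofFn p).getD r 0⁆
              (((List.ofFn p).eraseIdx s).eraseIdx r)
          else 0) := by
  have hP : (List.ofFn fun r => ExteriorAlgebra.ι ℂ (p r)).prod
      = ((List.ofFn p).map ιg).prod := by
    rw [List.map_ofFn]; rfl
  rw [← hP, hdel p, Finset.sum_comm, map_sum]
  rw [← Fin.sum_univ_eq_sum_range (fun s => ∑ r ∈ Finset.range (d+1),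
    (if r < s then
      (-1:ℂ)^(r+s) • Bex x ⁅(List.ofFn p).getD s 0, (List.ofFn p).getD r 0⁆
        (((List.ofFn p).eraseIdx s).eraseIdx r)
    else 0)) (d+1)]
  refine Finset.sum_congr rfl fun s _ => ?_
  rw [map_sum]
  rw [← Fin.sum_univ_eq_sum_range (fun r =>
    (if r < s.val then
      (-1:ℂ)^(r+s.val) • Bex x ⁅(List.ofFn p).getD s.val 0, (List.ofFn p).getD r 0⁆
        (((List.ofFn p).eraseIdx s.val).eraseIdx r)
    else 0)) (d+1)]
  refine Finset.sum_congr rfl fun r _ => ?_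
  have hlist : (((List.ofFn fun t => ExteriorAlgebra.ι ℂ (p t)).eraseIdx
      s.val).eraseIdx r.val) = ((((List.ofFn p).eraseIdx s.val).eraseIdx r.val).map ιg) := by
    have : (List.ofFn fun t => ExteriorAlgebra.ι ℂ (p t)) = (List.ofFn p).map ιg := by
      rw [List.map_ofFn]; rfl
    rw [this, my_map_eraseIdx, my_map_eraseIdx]
  have hu : ∀ t : Fin (d+1), p t = (List.ofFn p).getD t.val 0 := by
    intro t
    rw [List.getD_eq_getElem _ _ (by simp [t.isLt]), List.getElem_ofFn]
  by_cases h : r < s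
  · rw [if_pos h, if_pos (show r.val < s.val from h), map_smul, Mapply, hlist, Bex,
      ← hu s, ← hu r]
  · rw [if_neg h, if_neg (show ¬ (r.val < s.val) from h), map_zero]

-- span lemma
theorem my_span (m : ℕ) :
    (LinearMap.range ιg) ^ m
      ≤ Submodule.span ℂ (Set.range fun p : Fin m → g => ((List.ofFn p).map ιg).prod) := by
  induction m with
  | zero =>
    rw [pow_zero, Submodule.one_eq_span]
    refine Submodule.span_le.mpr ?_
    rintro _ rfl
    exact Submodule.subset_span ⟨fun i => i.elim0, by simp⟩
  | succ m ih =>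
    rw [pow_succ]
    refine Submodule.mul_le.mpr fun a ha b hb => ?_
    obtain ⟨v, rfl⟩ := hb
    have ha' := ih ha
    have hcomap : Submodule.span ℂ (Set.range fun p : Fin m → g => ((List.ofFn p).map ιg).prod)
        ≤ Submodule.comap (LinearMap.mulRight ℂ (ιg v))
            (Submodule.span ℂ
              (Set.range fun p : Fin (m+1) → g => ((List.ofFn p).map ιg).prod)) := by
      refine Submodule.span_le.mpr ?_
      rintro _ ⟨q, rfl⟩
      refine Submodule.subset_span ⟨Fin.snoc q v, ?_⟩
      show (List.map ιg (List.ofFn (Fin.snoc q v))).prod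
        = (LinearMap.mulRight ℂ (ιg v)) (((List.ofFn q).map ιg).prod)
      rw [LinearMap.mulRight_apply, List.ofFn_succ' (Fin.snoc q v)]
      simp only [Fin.snoc_castSucc, Fin.snoc_last, List.concat_eq_append, List.map_append,
        List.prod_append, List.map_cons, List.map_nil, List.prod_cons, List.prod_nil, mul_one]
    exact hcomap ha'
end

/-- `C_w` vanishes on the kernel of `∂`: if `y ∈ ⋀^{d+1} g` satisfies `∂ y = 0`
then `C_w y = 0`. -/
theorem stmt_8 (g : Type) [LieRing g] [LieAlgebra ℂ g] [Module.Finite ℂ g]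
    [LieAlgebra.IsSimple ℂ g]
    (n : ℕ) (Φ : g →ₗ[ℂ] g →ₗ[ℂ] ℂ)
    (hΦsymm : ∀ u v : g, Φ u v = Φ v u)
    (hΦinv : ∀ z u v : g, Φ ⁅z, u⁆ v + Φ u ⁅z, v⁆ = 0)
    (x : Module.Basis (Fin n) ℂ g)
    (hx : ∀ i j, Φ (x i) (x j) = if i = j then 1 else 0)
    -- `I_z`: contraction with `z` via the form
    (Iop : g → (ExteriorAlgebra ℂ g →ₗ[ℂ] ExteriorAlgebra ℂ g))
    (hIone : ∀ z : g, Iop z 1 = 0)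
    (hImul : ∀ (z v : g) (a : ExteriorAlgebra ℂ g),
      Iop z (ExteriorAlgebra.ι ℂ v * a) =
        Φ z v • a - ExteriorAlgebra.ι ℂ v * Iop z a)
    -- `L_z`: the Lie derivative extending `ad z`
    (Lop : g → (ExteriorAlgebra ℂ g →ₗ[ℂ] ExteriorAlgebra ℂ g))
    (hLone : ∀ z : g, Lop z 1 = 0)
    (hLmul : ∀ (z v : g) (a : ExteriorAlgebra ℂ g),
      Lop z (ExteriorAlgebra.ι ℂ v * a) =
        ExteriorAlgebra.ι ℂ ⁅z, v⁆ * a + ExteriorAlgebra.ι ℂ v * Lop z a)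
    (d : ℕ)
    -- `∂`, characterized on decomposables of degree `d + 1`
    (del : ExteriorAlgebra ℂ g →ₗ[ℂ] g ⊗[ℂ] ExteriorAlgebra ℂ g)
    (hdel : ∀ p : Fin (d + 1) → g,
      del (List.ofFn fun r => ExteriorAlgebra.ι ℂ (p r)).prod =
        ∑ r : Fin (d + 1), ∑ s : Fin (d + 1),
          if r < s then
            ((-1 : ℂ) ^ (r.val + s.val)) •
              (⁅p s, p r⁆ ⊗ₜ[ℂ]
                (((List.ofFn fun t => ExteriorAlgebra.ι ℂ (p t)).eraseIdx
                  s.val).eraseIdx r.val).prod)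
          else 0) :
    -- if `y ∈ ⋀^{d+1} g` and `∂ y = 0` then `C_w y = 0`
    ∀ y ∈ (LinearMap.range
        (ExteriorAlgebra.ι ℂ : g →ₗ[ℂ] ExteriorAlgebra ℂ g)) ^ (d + 1),
      del y = 0 →
      (∑ i, ∑ j, ExteriorAlgebra.ι ℂ (x i) *
        Lop ⁅x i, x j⁆ (Iop (x j) y)) = 0 := by
  intro y hy hdely
  classical
  set T : ExteriorAlgebra ℂ g →ₗ[ℂ] ExteriorAlgebra ℂ g :=
    ∑ i, ∑ j, (LinearMap.mulLeft ℂ (ExteriorAlgebra.ι ℂ (x i))) ∘ₗ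
      ((Lop ⁅x i, x j⁆) ∘ₗ (Iop (x j))) with hTdef
  have hT : ∀ z : ExteriorAlgebra ℂ g,
      T z = ∑ i, ∑ j, ExteriorAlgebra.ι ℂ (x i) * Lop ⁅x i, x j⁆ (Iop (x j) z) := by
    intro z
    simp [hTdef, LinearMap.sum_apply, LinearMap.comp_apply, LinearMap.mulLeft_apply]
  have hker : Submodule.span ℂ (Set.range fun p : Fin (d+1) → g =>
        ((List.ofFn p).map (ExteriorAlgebra.ι ℂ : g →ₗ[ℂ] ExteriorAlgebra ℂ g)).prod)
      ≤ LinearMap.ker (T - (Mmap x) ∘ₗ del) := by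
    refine Submodule.span_le.mpr ?_
    rintro _ ⟨p, rfl⟩
    rw [SetLike.mem_coe, LinearMap.mem_ker, LinearMap.sub_apply, LinearMap.comp_apply,
      sub_eq_zero, hT]
    rw [my_main Φ x hΦsymm hΦinv hx Iop hIone hImul Lop hLone hLmul d p,
      my_delside x d del hdel p]
  have hy' : y ∈ LinearMap.ker (T - Mmap x ∘ₗ del) := hker (my_span (d+1) hy)
  rw [LinearMap.mem_ker, LinearMap.sub_apply, LinearMap.comp_apply, sub_eq_zero] at hy'
  rw [← hT y, hy', hdely, map_zero]
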